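/- arXiv:1704.00303 — 4 statements merged into one kernel-verified Lean document; each statement's English description precedes it below -/
import Mathlib

section
/- Let $\mathcal{K}$ be a locally small category (objects in a universe $u$, hom-sets in a universe $v$). If $\mathcal{K}$ is concrete, i.e. admits a faithful functor into the category of $v$-small types, then for every object $A$ of $\mathcal{K}$ the class of generalized regular subobjects of $A$ is small: the quotient of the class of all morphisms with codomain $A$ by the relation $\simeq$ is $v$-small. -/
/-!
Freyd condition (Proposition 2.5): if a locally small category `K` is
concrete (admits a faithful functor to `Type v`), then for every object `A`
the class of generalized regular subobjects of `A` — the quotient of the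
class of all morphisms with codomain `A` by the relation identifying `f`
and `g` whenever they equalize the same pairs of arrows — is `v`-small.
-/

universe v u

open CategoryTheory

theorem freyd_condition {K : Type u} [Category.{v} K]
    (hconcrete : ∃ F : K ⥤ Type v, F.Faithful) (A : K) :
    Small.{v} (Quot (fun (f g : Σ X : K, X ⟶ A) =>
      ∀ (B : K) (u v : A ⟶ B), (f.2 ≫ u = f.2 ≫ v) ↔ (g.2 ≫ u = g.2 ≫ v))) := by
  obtain ⟨F, hF⟩ := hconcrete
  set φ : (Σ X : K, X ⟶ A) → Set (F.obj A) := fun f => Set.range (F.map f.2) with hφ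
  -- key: same image implies equalizing the same pairs (one direction)
  have key : ∀ f g : (Σ X : K, X ⟶ A), φ f = φ g →
      ∀ (B : K) (u v : A ⟶ B), f.2 ≫ u = f.2 ≫ v → g.2 ≫ u = g.2 ≫ v := by
    intro f g h B u v huv
    apply hF.map_injective
    rw [F.map_comp, F.map_comp]
    ext x
    have hx : F.map g.2 x ∈ Set.range (F.map f.2) := by
      rw [show Set.range (F.map f.2) = Set.range (F.map g.2) from h]
      exact ⟨x, rfl⟩
    obtain ⟨y, hy⟩ := hx
    have : F.map (f.2 ≫ u) y = F.map (f.2 ≫ v) y := by rw [huv]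
    simp only [F.map_comp, types_comp_apply] at this
    change F.map u (F.map g.2 x) = F.map v (F.map g.2 x)
    simp only [types_comp_apply, ← hy, this]
  -- the quotient by "same image" is small
  have h1 : Small.{v} (Quot (fun f g : (Σ X : K, X ⟶ A) => φ f = φ g)) := by
    apply small_of_injective (f := Quot.lift φ (fun a b h => h))
    intro a b
    induction a using Quot.ind
    induction b using Quot.ind
    exact fun h => Quot.sound h
  -- our quotient is a surjective image of that one
  exact small_of_surjective (f := Quot.lift
      (fun f => Quot.mk _ f)
      (fun a b h => Quot.sound (fun B u v =>
        ⟨key a b h B u v, key b a h.symm B u v⟩)))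
    (by intro q; induction q using Quot.ind with
        | _ f => exact ⟨Quot.mk _ f, rfl⟩)
end

section
/- Let $\mathcal{K}$ be a locally small category (objects in a universe $u$, hom-sets in a universe $v$). If $\mathcal{K}$ is concrete, i.e. admits a faithful functor into the category of $v$-small types, then for every object $A$ of $\mathcal{K}$ the class of generalized regular quotients of $A$ is small: the quotient of the class of all morphisms with domain $A$ by the relation $\simeq$ is $v$-small. -/
/-!
Co-Freyd condition (Proposition 2.6): if a locally small category `K` is
concrete (admits a faithful functor to `Type v`), then for every object `A`
the class of generalized regular quotients of `A` — the quotient of the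
class of all morphisms with domain `A` by the relation identifying `f`
and `g` whenever they coequalize the same pairs of arrows — is `v`-small.
-/

universe v u

open CategoryTheory

theorem co_freyd_condition {K : Type u} [Category.{v} K]
    (hconcrete : ∃ F : K ⥤ Type v, F.Faithful) (A : K) :
    Small.{v} (Quot (fun (f g : Σ X : K, A ⟶ X) =>
      ∀ (B : K) (u v : B ⟶ A), (u ≫ f.2 = v ≫ f.2) ↔ (u ≫ g.2 = v ≫ g.2))) := by
  classical
  obtain ⟨F, hF⟩ := hconcrete
  set r : (Σ X : K, A ⟶ X) → (Σ X : K, A ⟶ X) → Prop :=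
    fun f g => ∀ (B : K) (u v : B ⟶ A), (u ≫ f.2 = v ≫ f.2) ↔ (u ≫ g.2 = v ≫ g.2)
  -- kernel relation of `F.map f.2`
  set ψ : (Σ X : K, A ⟶ X) → (F.obj A → F.obj A → Prop) :=
    fun f a b => F.map f.2 a = F.map f.2 b with hψ
  have key : ∀ f g, ψ f = ψ g → r f g := by
    intro f g h B u v
    have step : ∀ (k : Σ X : K, A ⟶ X),
        (u ≫ k.2 = v ≫ k.2) ↔ ∀ x, ψ k (F.map u x) (F.map v x) := by
      intro k
      constructor
      · intro he x
        simp only [hψ]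
        have := congrArg (fun m => F.map m x) he
        simpa [F.map_comp] using this
      · intro he
        apply hF.map_injective
        ext x
        have := he x
        simpa [F.map_comp, hψ] using this
    rw [step f, step g, h]
  -- surjection from a v-small type
  let φ : (F.obj A → F.obj A → Prop) → Quot r := fun s =>
    if h : ∃ f, ψ f = s then Quot.mk r h.choose else Quot.mk r ⟨A, 𝟙 A⟩
  have hsurj : Function.Surjective φ := by
    intro q
    induction q using Quot.ind with
    | _ f =>
      refine ⟨ψ f, ?_⟩
      have h : ∃ g, ψ g = ψ f := ⟨f, rfl⟩
      simp only [φ, dif_pos h]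
      exact Quot.sound (key _ _ h.choose_spec)
  exact small_of_surjective hsurj
end

section
/- Let $\mathcal{K}$ be a locally small category with zero morphisms, and let $X$ be an object of $\mathcal{K}$. Suppose that for every ordinal $\alpha$ we are given objects $Y_\alpha$, $F_\alpha$ and morphisms $u_\alpha : Y_\alpha \to X$ and $v_\alpha : X \to F_\alpha$ such that $v_\alpha \circ u_\alpha = 0$ for every $\alpha$, and $v_\alpha \circ u_\beta \neq 0$ whenever $\alpha < \beta$. Then for all $\alpha < \beta$ the morphisms $v_\alpha$ and $v_\beta$ are not $\simeq$-equivalent as generalized regular quotients of $X$; consequently the class $Q(\mathcal{K}/X)$ of generalized regular quotients of $X$ is not small, and $\mathcal{K}$ is not concrete. -/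
/-!
The abstract core of Propositions 3.8 / 4.10 combined with the co-Freyd
condition: in a locally small category `K` with zero morphisms, an
ordinal-indexed family of morphisms `u α : Y α ⟶ X`, `v α : X ⟶ F α` with
`u α ≫ v α = 0` and `u β ≫ v α ≠ 0` for `α < β` yields pairwise
non-`≃`-equivalent generalized regular quotients of `X`; hence the class of
generalized regular quotients of `X` is not small and `K` is not concrete.
-/

universe v u

open CategoryTheory CategoryTheory.Limits

theorem not_concrete_of_ordinal_family
    {K : Type u} [Category.{v} K] [HasZeroMorphisms K] (X : K)
    (Y F : Ordinal.{v} → K)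
    (u : ∀ α, Y α ⟶ X) (v : ∀ α, X ⟶ F α)
    (h0 : ∀ α, u α ≫ v α = 0)
    (h1 : ∀ α β, α < β → u β ≫ v α ≠ 0) :
    (∀ α β, α < β →
      ¬ (∀ (B : K) (s t : B ⟶ X), (s ≫ v α = t ≫ v α) ↔ (s ≫ v β = t ≫ v β))) ∧
    ¬ Small.{v} (Quot (fun (f g : Σ Z : K, X ⟶ Z) =>
        ∀ (B : K) (s t : B ⟶ X), (s ≫ f.2 = t ≫ f.2) ↔ (s ≫ g.2 = t ≫ g.2))) ∧
    (∀ G : K ⥤ Type v, ¬ G.Faithful) := by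
  set r : (Σ Z : K, X ⟶ Z) → (Σ Z : K, X ⟶ Z) → Prop := fun f g =>
    ∀ (B : K) (s t : B ⟶ X), (s ≫ f.2 = t ≫ f.2) ↔ (s ≫ g.2 = t ≫ g.2) with hr
  have hequiv : Equivalence r := by
    constructor
    · intro f B s t; rfl
    · intro f g h B s t; exact (h B s t).symm
    · intro f g h hfg hgh B s t; exact (hfg B s t).trans (hgh B s t)
  -- Part 1
  have part1 : ∀ α β, α < β →
      ¬ (∀ (B : K) (s t : B ⟶ X), (s ≫ v α = t ≫ v α) ↔ (s ≫ v β = t ≫ v β)) := by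
    intro α β hαβ h
    apply h1 α β hαβ
    have : u β ≫ v β = (0 : Y β ⟶ X) ≫ v β := by rw [h0, zero_comp]
    have h2 := (h (Y β) (u β) 0).mpr this
    rwa [zero_comp] at h2
  -- Part 2
  have part2 : ¬ Small.{v} (Quot r) := by
    intro hsmall
    have hinj : Function.Injective
        (fun α : Ordinal.{v} => Quot.mk r ⟨F α, v α⟩) := by
      intro α β h
      by_contra hne
      rcases Ne.lt_or_gt hne with hlt | hlt
      · exact part1 α β hlt (hequiv.eqvGen_iff.mp (Quot.eq.mp h))
      · exact part1 β α hlt (hequiv.eqvGen_iff.mp (Quot.eq.mp h.symm))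
    have : Small.{v} Ordinal.{v} := small_of_injective hinj
    exact not_small_ordinal.{v} this
  refine ⟨part1, part2, ?_⟩
  -- Part 3
  intro G hG
  apply part2
  set φ : (Σ Z : K, X ⟶ Z) → (G.obj X → G.obj X → Prop) :=
    fun f a b => G.map f.2 a = G.map f.2 b with hφ
  have key : ∀ f g, φ f = φ g → r f g := by
    intro f g h B s t
    have aux : ∀ (w : Σ Z : K, X ⟶ Z),
        (s ≫ w.2 = t ≫ w.2) ↔ ∀ x, φ w (G.map s x) (G.map t x) := by
      intro w
      constructor
      · intro he x
        simp only [hφ]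
        have : G.map (s ≫ w.2) = G.map (t ≫ w.2) := by rw [he]
        simp only [G.map_comp] at this
        exact ConcreteCategory.congr_hom this x
      · intro he
        apply hG.map_injective
        rw [G.map_comp, G.map_comp]
        ext x
        exact he x
    rw [aux f, aux g, h]
  have hsurj : Function.Surjective
      (fun ρ : Set.range φ => Quot.mk r ρ.2.choose) := by
    intro q
    induction q using Quot.ind with
    | _ f =>
      refine ⟨⟨φ f, f, rfl⟩, ?_⟩
      exact Quot.sound (key _ _ (Exists.choose_spec (⟨f, rfl⟩ : ∃ g, φ g = φ f)))
  exact small_of_surjective hsurj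
end

section
/- Let $\mathcal{M}$ be a model category and let $\mathcal{W}$ be a full subcategory of $\mathcal{M}$ whose inclusion $U : \mathcal{W} \to \mathcal{M}$ admits both a left adjoint and a right adjoint, and equip $\mathcal{W}$ with the model structure in which a morphism $\varphi$ is a weak equivalence (respectively cofibration, fibration) if and only if $U\varphi$ is a weak equivalence (respectively cofibration, fibration) in $\mathcal{M}$. Then the induced functor $\mathrm{HO}(\mathcal{W}) \to \mathrm{HO}(\mathcal{M})$ between the localizations at the weak equivalences is faithful. -/
/-!
Proposition 2.11: if `W` is a full reflective and coreflective subcategory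
of a model category `M` (the inclusion `U` is fully faithful and admits both
adjoints), and `W` carries the model structure created by `U` (a morphism is
a weak equivalence / cofibration / fibration iff its image under `U` is),
then the induced functor `HO(W) ⥤ HO(M)` between the localizations at the
weak equivalences is faithful.
-/

universe v u v' u'

open CategoryTheory CategoryTheory.Limits

/-- `f` is a retract of `g`. -/
def IsRetractOf {M : Type u} [Category.{v} M] {X Y X' Y' : M}
    (f : X ⟶ Y) (g : X' ⟶ Y') : Prop :=
  ∃ (i : X ⟶ X') (r : X' ⟶ X) (i' : Y ⟶ Y') (r' : Y' ⟶ Y),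
    i ≫ r = 𝟙 X ∧ i' ≫ r' = 𝟙 Y ∧ i ≫ g = f ≫ i' ∧ g ≫ r' = r ≫ f

/-- A (Quillen) model structure on a category: three classes of maps
(weak equivalences, cofibrations, fibrations) satisfying the usual axioms,
on a finitely bicomplete category. -/
structure ModelStructure (M : Type u) [Category.{v} M] : Type (max u (v + 1)) where
  [hasFiniteLimits : HasFiniteLimits M]
  [hasFiniteColimits : HasFiniteColimits M]
  weq : MorphismProperty M
  cof : MorphismProperty M
  fib : MorphismProperty M
  weq_comp : ∀ {X Y Z : M} (f : X ⟶ Y) (g : Y ⟶ Z), weq f → weq g → weq (f ≫ g)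
  weq_cancel_left : ∀ {X Y Z : M} (f : X ⟶ Y) (g : Y ⟶ Z), weq g → weq (f ≫ g) → weq f
  weq_cancel_right : ∀ {X Y Z : M} (f : X ⟶ Y) (g : Y ⟶ Z), weq f → weq (f ≫ g) → weq g
  weq_retract : ∀ {X Y X' Y' : M} (f : X ⟶ Y) (g : X' ⟶ Y'),
    IsRetractOf f g → weq g → weq f
  cof_retract : ∀ {X Y X' Y' : M} (f : X ⟶ Y) (g : X' ⟶ Y'),
    IsRetractOf f g → cof g → cof f
  fib_retract : ∀ {X Y X' Y' : M} (f : X ⟶ Y) (g : X' ⟶ Y'),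
    IsRetractOf f g → fib g → fib f
  lift_cof_trivFib : ∀ {A B X Y : M} (i : A ⟶ B) (p : X ⟶ Y),
    cof i → weq p → fib p → HasLiftingProperty i p
  lift_trivCof_fib : ∀ {A B X Y : M} (i : A ⟶ B) (p : X ⟶ Y),
    cof i → weq i → fib p → HasLiftingProperty i p
  factor_cof_trivFib : ∀ {X Y : M} (f : X ⟶ Y),
    ∃ (Z : M) (i : X ⟶ Z) (p : Z ⟶ Y), cof i ∧ weq p ∧ fib p ∧ i ≫ p = f
  factor_trivCof_fib : ∀ {X Y : M} (f : X ⟶ Y),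
    ∃ (Z : M) (i : X ⟶ Z) (p : Z ⟶ Y), cof i ∧ weq i ∧ fib p ∧ i ≫ p = f

namespace PiercingProof

variable {M : Type u} [Category.{v} M] {W : Type u'} [Category.{v'} W]

section MLemmas

variable (mM : ModelStructure M)

lemma weq_id (X : M) : mM.weq (𝟙 X) := by
  obtain ⟨Z, i, p, hi, hpw, hpf, hip⟩ := mM.factor_cof_trivFib (𝟙 X)
  exact mM.weq_retract _ p
    ⟨i, p, 𝟙 X, 𝟙 X, hip, by simp, by simp [hip], by simp⟩ hpw

lemma cof_of_llp {X Y : M} (f : X ⟶ Y)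
    (h : ∀ ⦃Z T : M⦄ (p : Z ⟶ T), mM.weq p → mM.fib p → HasLiftingProperty f p) :
    mM.cof f := by
  obtain ⟨Z, i, p, hi, hpw, hpf, hip⟩ := mM.factor_cof_trivFib f
  haveI := h p hpw hpf
  have sq : CommSq i f p (𝟙 Y) := ⟨by simp [hip]⟩
  refine mM.cof_retract _ i ⟨𝟙 X, 𝟙 X, sq.lift, p, by simp, sq.fac_right, ?_, ?_⟩ hi
  · simpa using sq.fac_left.symm
  · simp [hip]

variable [HasInitial M] [HasBinaryCoproducts M]

lemma llp_inl {A B Z T : M} (hB : mM.cof (initial.to B))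
    (p : Z ⟶ T) (hpw : mM.weq p) (hpf : mM.fib p) :
    HasLiftingProperty (coprod.inl : A ⟶ A ⨿ B) p := by
  constructor
  intro t b sq
  haveI := mM.lift_cof_trivFib (initial.to B) p hB hpw hpf
  have sq2 : CommSq (initial.to Z) (initial.to B) p (coprod.inr ≫ b) :=
    ⟨initial.hom_ext _ _⟩
  refine ⟨⟨⟨coprod.desc t sq2.lift, by simp [coprod.inl_desc], ?_⟩⟩⟩
  apply coprod.hom_ext
  · simpa [coprod.inl_desc] using sq.w
  · simpa [coprod.inr_desc] using sq2.fac_right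

lemma llp_inr {A B Z T : M} (hA : mM.cof (initial.to A))
    (p : Z ⟶ T) (hpw : mM.weq p) (hpf : mM.fib p) :
    HasLiftingProperty (coprod.inr : B ⟶ A ⨿ B) p := by
  constructor
  intro t b sq
  haveI := mM.lift_cof_trivFib (initial.to A) p hA hpw hpf
  have sq2 : CommSq (initial.to Z) (initial.to A) p (coprod.inl ≫ b) :=
    ⟨initial.hom_ext _ _⟩
  refine ⟨⟨⟨coprod.desc sq2.lift t, by simp [coprod.inr_desc], ?_⟩⟩⟩
  apply coprod.hom_ext
  · simpa [coprod.inl_desc] using sq2.fac_right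
  · simpa [coprod.inr_desc] using sq.w

lemma cof_initial_coprod {A B : M} (hA : mM.cof (initial.to A))
    (hB : mM.cof (initial.to B)) : mM.cof (initial.to (A ⨿ B)) := by
  have e : (initial.to (A ⨿ B)) = initial.to A ≫ coprod.inl := initial.hom_ext _ _
  rw [e]
  refine cof_of_llp mM _ (fun Z T p hpw hpf => ?_)
  haveI := mM.lift_cof_trivFib (initial.to A) p hA hpw hpf
  haveI := llp_inl mM (A := A) hB p hpw hpf
  infer_instance

lemma cof_initial_of_isInitial {I X : M} (hI : IsInitial I) (f : I ⟶ X)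
    (hf : mM.cof f) : mM.cof (initial.to X) := by
  refine mM.cof_retract _ f
    ⟨initial.to I, hI.to _, 𝟙 X, 𝟙 X, initial.hom_ext _ _, by simp,
      initial.hom_ext _ _, hI.hom_ext _ _⟩ hf

end MLemmas

section WLemmas

variable (mM : ModelStructure M) (mW : ModelStructure W)
variable {L : M ⥤ W} {U : W ⥤ M} (adj : L ⊣ U)
variable (hfib : mW.fib = mM.fib.inverseImage U)

include adj hfib in
lemma weqW_L_map {X Y : M} (i : X ⟶ Y) (hc : mM.cof i) (hw : mM.weq i) :
    mW.weq (L.map i) := by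
  obtain ⟨Z, j, p, hj, hjw, hpf, hjp⟩ := mW.factor_trivCof_fib (L.map i)
  haveI : HasLiftingProperty (L.map i) p := by
    rw [adj.hasLiftingProperty_iff]
    exact mM.lift_trivCof_fib i (U.map p) hc hw (by rw [hfib] at hpf; exact hpf)
  have sq : CommSq j (L.map i) p (𝟙 _) := ⟨by simp [hjp]⟩
  refine mW.weq_retract _ j ⟨𝟙 _, 𝟙 _, sq.lift, p, by simp, sq.fac_right, ?_, ?_⟩ hjw
  · simpa using sq.fac_left.symm
  · simp [hjp]

variable [HasInitial M] [HasBinaryCoproducts M]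

include adj hfib in
lemma isIso_QL_of_weq {C D : M} (σ : C ⟶ D) (hσ : mM.weq σ)
    (hC : mM.cof (initial.to C)) (hD : mM.cof (initial.to D)) :
    IsIso (mW.weq.Q.map (L.map σ)) := by
  obtain ⟨E, q, r, hq, hrw, hrf, hqr⟩ := mM.factor_cof_trivFib (coprod.desc σ (𝟙 D))
  have ha_c : mM.cof (coprod.inl ≫ q) := by
    refine cof_of_llp mM _ (fun Z T p hpw hpf => ?_)
    haveI := llp_inl mM (A := C) hD p hpw hpf
    haveI := mM.lift_cof_trivFib q p hq hpw hpf
    infer_instance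
  have har : (coprod.inl ≫ q) ≫ r = σ := by rw [Category.assoc, hqr]; simp [coprod.inl_desc]
  have hbr : (coprod.inr ≫ q) ≫ r = 𝟙 D := by rw [Category.assoc, hqr]; simp [coprod.inr_desc]
  have ha_w : mM.weq (coprod.inl ≫ q) :=
    mM.weq_cancel_left _ r hrw (by rw [har]; exact hσ)
  have hb_c : mM.cof (coprod.inr ≫ q) := by
    refine cof_of_llp mM _ (fun Z T p hpw hpf => ?_)
    haveI := llp_inr mM (B := D) hC p hpw hpf
    haveI := mM.lift_cof_trivFib q p hq hpw hpf
    infer_instance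
  have hb_w : mM.weq (coprod.inr ≫ q) :=
    mM.weq_cancel_left _ r hrw (by rw [hbr]; exact weq_id mM D)
  haveI iLa : IsIso (mW.weq.Q.map (L.map (coprod.inl ≫ q))) :=
    Localization.inverts mW.weq.Q mW.weq _ (weqW_L_map mM mW adj hfib _ ha_c ha_w)
  haveI iLb : IsIso (mW.weq.Q.map (L.map (coprod.inr ≫ q))) :=
    Localization.inverts mW.weq.Q mW.weq _ (weqW_L_map mM mW adj hfib _ hb_c hb_w)
  have e1 : mW.weq.Q.map (L.map (coprod.inr ≫ q)) ≫ mW.weq.Q.map (L.map r) = 𝟙 _ := by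
    rw [← Functor.map_comp, ← Functor.map_comp, hbr]
    simp
  haveI : IsIso (mW.weq.Q.map (L.map r)) := by
    rw [← IsIso.inv_eq_of_hom_inv_id e1]
    infer_instance
  have : mW.weq.Q.map (L.map σ)
      = mW.weq.Q.map (L.map (coprod.inl ≫ q)) ≫ mW.weq.Q.map (L.map r) := by
    rw [← Functor.map_comp, ← Functor.map_comp, har]
  rw [this]
  infer_instance

include adj hfib in
lemma QL_congr {A B Y : M} (g h : A ⟶ B) (hA : mM.cof (initial.to A))
    (p : B ⟶ Y) (hpw : mM.weq p) (hpf : mM.fib p) (hgh : g ≫ p = h ≫ p) :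
    mW.weq.Q.map (L.map g) = mW.weq.Q.map (L.map h) := by
  obtain ⟨Cyl, j, σ, hj, hσw, hσf, hjσ⟩ := mM.factor_cof_trivFib (coprod.desc (𝟙 A) (𝟙 A))
  haveI := mM.lift_cof_trivFib j p hj hpw hpf
  have w : coprod.desc g h ≫ p = j ≫ σ ≫ g ≫ p := by
    rw [← Category.assoc, hjσ]
    apply coprod.hom_ext
    · simp [coprod.inl_desc]
    · simp [hgh, coprod.inr_desc]
  have sq : CommSq (coprod.desc g h) j p (σ ≫ g ≫ p) := ⟨w⟩
  have hAA : mM.cof (initial.to (A ⨿ A)) := cof_initial_coprod mM hA hA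
  have hCyl : mM.cof (initial.to Cyl) := by
    have e : (initial.to Cyl) = initial.to (A ⨿ A) ≫ j := initial.hom_ext _ _
    rw [e]
    refine cof_of_llp mM _ (fun Z T p' hpw' hpf' => ?_)
    haveI := mM.lift_cof_trivFib (initial.to (A ⨿ A)) p' hAA hpw' hpf'
    haveI := mM.lift_cof_trivFib j p' hj hpw' hpf'
    infer_instance
  haveI iσ : IsIso (mW.weq.Q.map (L.map σ)) :=
    isIso_QL_of_weq mM mW adj hfib σ hσw hCyl hA
  have e1 : mW.weq.Q.map (L.map (coprod.inl ≫ j)) ≫ mW.weq.Q.map (L.map σ) = 𝟙 _ := by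
    rw [← Functor.map_comp, ← Functor.map_comp, Category.assoc, hjσ]
    simp [coprod.inl_desc]
  have e2 : mW.weq.Q.map (L.map (coprod.inr ≫ j)) ≫ mW.weq.Q.map (L.map σ) = 𝟙 _ := by
    rw [← Functor.map_comp, ← Functor.map_comp, Category.assoc, hjσ]
    simp [coprod.inr_desc]
  have key : mW.weq.Q.map (L.map (coprod.inl ≫ j))
      = mW.weq.Q.map (L.map (coprod.inr ≫ j)) := by
    rw [← IsIso.inv_eq_of_inv_hom_id e1, ← IsIso.inv_eq_of_inv_hom_id e2]
  have h1 : mW.weq.Q.map (L.map g)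
      = mW.weq.Q.map (L.map (coprod.inl ≫ j)) ≫ mW.weq.Q.map (L.map sq.lift) := by
    rw [← Functor.map_comp, ← Functor.map_comp, Category.assoc, sq.fac_left]
    simp [coprod.inl_desc]
  have h2 : mW.weq.Q.map (L.map h)
      = mW.weq.Q.map (L.map (coprod.inr ≫ j)) ≫ mW.weq.Q.map (L.map sq.lift) := by
    rw [← Functor.map_comp, ← Functor.map_comp, Category.assoc, sq.fac_left]
    simp [coprod.inr_desc]
  rw [h1, h2, key]

end WLemmas

section Construction

variable {M : Type u} [Category.{v} M] {W : Type u'} [Category.{v'} W]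

/-- Chosen cofibrant replacements together with chosen lifts of morphisms. -/
structure ReplData [HasInitial M] (mM : ModelStructure M) where
  Qo : M → M
  pq : ∀ X : M, Qo X ⟶ X
  cof_init : ∀ X, mM.cof (initial.to (Qo X))
  weq_pq : ∀ X, mM.weq (pq X)
  fib_pq : ∀ X, mM.fib (pq X)
  tilde : ∀ {X Y : M}, (X ⟶ Y) → (Qo X ⟶ Qo Y)
  tilde_comm : ∀ {X Y : M} (f : X ⟶ Y), tilde f ≫ pq Y = pq X ≫ f

lemma nonempty_replData [HasInitial M] (mM : ModelStructure M) :
    Nonempty (ReplData mM) := by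
  have repl : ∀ X : M, ∃ (Z : M) (p : Z ⟶ X),
      mM.cof (initial.to Z) ∧ mM.weq p ∧ mM.fib p := by
    intro X
    obtain ⟨Z, i, p, hi, hw, hf, _⟩ := mM.factor_cof_trivFib (initial.to X)
    exact ⟨Z, p, by rwa [initial.hom_ext (initial.to Z) i], hw, hf⟩
  choose Qo pq h1 h2 h3 using repl
  have lex : ∀ (X Y : M) (f : X ⟶ Y), ∃ g : Qo X ⟶ Qo Y, g ≫ pq Y = pq X ≫ f := by
    intro X Y f
    haveI := mM.lift_cof_trivFib (initial.to (Qo X)) (pq Y) (h1 X) (h2 Y) (h3 Y)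
    have sq : CommSq (initial.to (Qo Y)) (initial.to (Qo X)) (pq Y) (pq X ≫ f) :=
      ⟨initial.hom_ext _ _⟩
    exact ⟨sq.lift, sq.fac_right⟩
  choose t ht using lex
  exact ⟨⟨Qo, pq, h1, h2, h3, fun {X Y} f => t X Y f, fun {X Y} f => ht X Y f⟩⟩

variable [HasInitial M] [HasBinaryCoproducts M]
variable (mM : ModelStructure M) (mW : ModelStructure W)
variable {L : M ⥤ W} {U : W ⥤ M} (adj : L ⊣ U)
variable (hfib : mW.fib = mM.fib.inverseImage U)

/-- The "derived reflector" `M ⥤ HO(W)`. -/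
noncomputable def Phi (D : ReplData mM) : M ⥤ mW.weq.Localization where
  obj X := mW.weq.Q.obj (L.obj (D.Qo X))
  map {X Y} f := mW.weq.Q.map (L.map (D.tilde f))
  map_id X := by
    rw [QL_congr mM mW adj hfib (D.tilde (𝟙 X)) (𝟙 (D.Qo X)) (D.cof_init X)
      (D.pq X) (D.weq_pq X) (D.fib_pq X) (by rw [D.tilde_comm]; simp)]
    simp
  map_comp {X Y Z} f g := by
    rw [QL_congr mM mW adj hfib (D.tilde (f ≫ g)) (D.tilde f ≫ D.tilde g) (D.cof_init X)
      (D.pq Z) (D.weq_pq Z) (D.fib_pq Z)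
      (by
        rw [D.tilde_comm (f ≫ g)]
        conv_rhs => rw [Category.assoc, D.tilde_comm g, ← Category.assoc, D.tilde_comm f,
          Category.assoc])]
    rw [L.map_comp, Functor.map_comp]

lemma Phi_inverts (D : ReplData mM) :
    mM.weq.IsInvertedBy (Phi mM mW adj hfib D) := by
  intro X Y f hf
  have hw : mM.weq (D.tilde f) :=
    mM.weq_cancel_left _ (D.pq Y) (D.weq_pq Y)
      (by rw [D.tilde_comm]; exact mM.weq_comp _ _ (D.weq_pq X) hf)
  exact isIso_QL_of_weq mM mW adj hfib _ hw (D.cof_init X) (D.cof_init Y)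

/-- The comparison `U ⋙ Φ ⟶ Q_W`. -/
noncomputable def tau (D : ReplData mM) :
    U ⋙ Phi mM mW adj hfib D ⟶ mW.weq.Q where
  app A := mW.weq.Q.map (L.map (D.pq (U.obj A)) ≫ adj.counit.app A)
  naturality {A B} a := by
    dsimp [Phi]
    rw [← Functor.map_comp, ← Functor.map_comp]
    congr 1
    rw [← Category.assoc, ← L.map_comp, D.tilde_comm, L.map_comp, Category.assoc,
      Category.assoc]
    congr 1
    have := adj.counit.naturality a
    simpa using this

lemma isIso_tau_app [HasInitial W] [U.Full] [U.Faithful]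
    (hweq : mW.weq = mM.weq.inverseImage U)
    (hcof : mW.cof = mM.cof.inverseImage U)
    (hUinit : IsInitial (U.obj (⊥_ W)))
    (D : ReplData mM) (A : W) :
    IsIso ((tau mM mW adj hfib D).app A) := by
  obtain ⟨A', i', q, hi', hqw, hqf, _⟩ := mW.factor_cof_trivFib (initial.to A)
  -- `U.obj A'` is cofibrant in `M`
  have hUq_w : mM.weq (U.map q) := by rw [hweq] at hqw; exact hqw
  have hUq_f : mM.fib (U.map q) := by rw [hfib] at hqf; exact hqf
  have hUA' : mM.cof (initial.to (U.obj A')) := by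
    refine cof_initial_of_isInitial mM hUinit (U.map i') ?_
    rw [hcof] at hi'; exact hi'
  -- comparison map between the two cofibrant replacements of `U.obj A`
  haveI := mM.lift_cof_trivFib (initial.to (D.Qo (U.obj A))) (U.map q)
    (D.cof_init (U.obj A)) hUq_w hUq_f
  have sq : CommSq (initial.to (U.obj A')) (initial.to (D.Qo (U.obj A))) (U.map q)
      (D.pq (U.obj A)) := ⟨initial.hom_ext _ _⟩
  obtain ⟨s, hs⟩ : ∃ s : D.Qo (U.obj A) ⟶ U.obj A', s ≫ U.map q = D.pq (U.obj A) :=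
    ⟨sq.lift, sq.fac_right⟩
  have hs_w : mM.weq s :=
    mM.weq_cancel_left _ (U.map q) hUq_w (by rw [hs]; exact D.weq_pq (U.obj A))
  haveI i1 : IsIso (mW.weq.Q.map (L.map s)) :=
    isIso_QL_of_weq mM mW adj hfib _ hs_w (D.cof_init (U.obj A)) hUA'
  haveI i2 : IsIso (mW.weq.Q.map q) := Localization.inverts mW.weq.Q mW.weq q hqw
  have decomp : (tau mM mW adj hfib D).app A
      = mW.weq.Q.map (L.map s) ≫ mW.weq.Q.map (adj.counit.app A')
        ≫ mW.weq.Q.map q := by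
    dsimp [tau]
    rw [← Functor.map_comp, ← Functor.map_comp]
    congr 1
    rw [← hs, L.map_comp, Category.assoc]
    congr 1
    have := (adj.counit.naturality q).symm
    simpa using this
  rw [decomp]
  haveI : IsIso (adj.counit.app A') := NatIso.isIso_app_of_isIso _ _
  haveI i3 : IsIso (mW.weq.Q.map (adj.counit.app A')) := Functor.map_isIso _ _
  exact @IsIso.comp_isIso _ _ _ _ _ _ _ i1 (@IsIso.comp_isIso _ _ _ _ _ _ _ i3 i2)

end Construction
end PiercingProof

theorem piercing_model_subcategory_induces_faithful_functor_on_homotopy_categories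
    {M : Type u} [Category.{v} M] (mM : ModelStructure M)
    {W : Type u'} [Category.{v'} W]
    (U : W ⥤ M) (hfull : U.Full) (hfaithful : U.Faithful)
    (hreflective : U.IsRightAdjoint) (hcoreflective : U.IsLeftAdjoint)
    (mW : ModelStructure W)
    (hweq : mW.weq = mM.weq.inverseImage U)
    (hcof : mW.cof = mM.cof.inverseImage U)
    (hfib : mW.fib = mM.fib.inverseImage U) :
    (Localization.lift (U ⋙ mM.weq.Q)
      (show mW.weq.IsInvertedBy (U ⋙ mM.weq.Q) from fun _ _ f hf =>
        Localization.inverts mM.weq.Q mM.weq (U.map f)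
          (by rw [hweq] at hf; exact hf))
      mW.weq.Q).Faithful := by
  haveI := mM.hasFiniteColimits
  haveI := mW.hasFiniteColimits
  haveI := hfull
  haveI := hfaithful
  haveI := hreflective
  haveI := hcoreflective
  haveI : PreservesColimitsOfSize.{0, 0} U :=
    (Adjunction.ofIsLeftAdjoint U).leftAdjoint_preservesColimits
  have hUinit : IsInitial (U.obj (⊥_ W)) :=
    isColimitOfHasInitialOfPreservesColimit U
  let adj : U.leftAdjoint ⊣ U := Adjunction.ofIsRightAdjoint U
  obtain ⟨D⟩ := PiercingProof.nonempty_replData mM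
  haveI : ∀ A : W, IsIso ((PiercingProof.tau mM mW adj hfib D).app A) := fun A =>
    PiercingProof.isIso_tau_app mM mW adj hfib hweq hcof hUinit D A
  haveI : IsIso (PiercingProof.tau mM mW adj hfib D) := NatIso.isIso_of_isIso_app _
  have hinv : mW.weq.IsInvertedBy (U ⋙ mM.weq.Q) := fun _ _ f hf =>
    Localization.inverts mM.weq.Q mM.weq (U.map f) (by rw [hweq] at hf; exact hf)
  show (Localization.lift (U ⋙ mM.weq.Q) hinv mW.weq.Q).Faithful
  refine Functor.Faithful.of_comp_iso
    (G := Localization.lift (PiercingProof.Phi mM mW adj hfib D)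
      (PiercingProof.Phi_inverts mM mW adj hfib D) mM.weq.Q)
    (H := 𝟭 _) ?_
  haveI : Localization.Lifting mW.weq.Q mW.weq
      (U ⋙ PiercingProof.Phi mM mW adj hfib D)
      (Localization.lift (U ⋙ mM.weq.Q) hinv mW.weq.Q ⋙
        Localization.lift (PiercingProof.Phi mM mW adj hfib D)
          (PiercingProof.Phi_inverts mM mW adj hfib D) mM.weq.Q) :=
    Localization.Lifting.ofIsos mW.weq.Q mW.weq
      (Functor.associator _ _ _ ≪≫ Functor.isoWhiskerLeft U
        (Localization.Lifting.iso mM.weq.Q mM.weq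
          (PiercingProof.Phi mM mW adj hfib D)
          (Localization.lift (PiercingProof.Phi mM mW adj hfib D)
            (PiercingProof.Phi_inverts mM mW adj hfib D) mM.weq.Q)))
      (Iso.refl _)
  exact Localization.liftNatIso mW.weq.Q mW.weq
    (U ⋙ PiercingProof.Phi mM mW adj hfib D) mW.weq.Q _ (𝟭 _)
    (asIso (PiercingProof.tau mM mW adj hfib D))
end
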